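/- Let D ∈ ℝ^{N×N} with ker D = span{1_N} (where 1_N is the all-ones vector), and let S ∈ ℝ^{(N-1)×N} be the difference matrix with S_{i,i} = -1, S_{i,i+1} = 1, and zeros elsewhere. Then there exists a unique matrix D̂ ∈ ℝ^{(N-1)×(N-1)} such that S D = D̂ S. -/

import Mathlib

open Matrix

theorem stmt2 {N : ℕ} (hN : 2 ≤ N)
    (D : Matrix (Fin N) (Fin N) ℝ)
    (hker : LinearMap.ker D.mulVecLin = Submodule.span ℝ {(fun _ => 1 : Fin N → ℝ)})
    (S : Matrix (Fin (N - 1)) (Fin N) ℝ)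
    (hS : ∀ i j, S i j = if (j : ℕ) = (i : ℕ) then -1
      else if (j : ℕ) = (i : ℕ) + 1 then 1 else 0) :
    ∃! Dhat : Matrix (Fin (N - 1)) (Fin (N - 1)) ℝ, S * D = Dhat * S := by
  have hN1 : N - 1 < N := by omega
  -- D annihilates the all-ones vector
  have hone : D.mulVec (fun _ => (1:ℝ)) = 0 := by
    have : (fun _ => (1:ℝ) : Fin N → ℝ) ∈ LinearMap.ker D.mulVecLin := by
      rw [hker]; exact Submodule.subset_span rfl
    simpa [Matrix.mulVecLin] using this
  -- mulVec formula for S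
  have hSvec : ∀ (x : Fin N → ℝ) (i : Fin (N-1)),
      S.mulVec x i = x ⟨(i:ℕ)+1, by omega⟩ - x ⟨(i:ℕ), by omega⟩ := by
    intro x i
    have hi : (i:ℕ) < N - 1 := i.isLt
    have hne : (⟨(i:ℕ), by omega⟩ : Fin N) ≠ ⟨(i:ℕ)+1, by omega⟩ := by
      simp [Fin.ext_iff]
    rw [Matrix.mulVec, dotProduct,
      Fintype.sum_eq_add (⟨(i:ℕ), by omega⟩ : Fin N) ⟨(i:ℕ)+1, by omega⟩ hne]
    · rw [hS, hS]; simp; ring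
    · intro c hc
      obtain ⟨hc1, hc2⟩ := hc
      rw [hS]
      have h1 : (c:ℕ) ≠ (i:ℕ) := fun h => hc1 (by simp [Fin.ext_iff, h])
      have h2 : (c:ℕ) ≠ (i:ℕ)+1 := fun h => hc2 (by simp [Fin.ext_iff, h])
      simp [h1, h2]
  -- the partial-sum section Σ
  set Sig : Matrix (Fin N) (Fin (N-1)) ℝ :=
    fun j k => if (k:ℕ) < (j:ℕ) then 1 else 0 with hSig
  have hSigvec : ∀ (y : Fin (N-1) → ℝ) (j : Fin N),
      Sig.mulVec y j = ∑ k ∈ Finset.range (j:ℕ),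
        (if h : k < N - 1 then y ⟨k, h⟩ else 0) := by
    intro y j
    rw [Matrix.mulVec, dotProduct]
    have step1 : ∀ i : Fin (N-1), Sig j i * y i
        = (fun k : ℕ => if h : k < N - 1 then (if k < (j:ℕ) then y ⟨k,h⟩ else 0) else 0) (i:ℕ) := by
      intro i
      by_cases hij : (i:ℕ) < (j:ℕ) <;> simp [hSig, i.isLt, hij]
    rw [Finset.sum_congr rfl (fun i _ => step1 i), Fin.sum_univ_eq_sum_range
      (fun k : ℕ => if h : k < N - 1 then (if k < (j:ℕ) then y ⟨k,h⟩ else 0) else 0) (N-1)]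
    rw [← Finset.sum_subset (Finset.range_subset_range.2 (by omega : (j:ℕ) ≤ N-1))
        (fun k _ hk' => by
          have h2 : ¬ k < (j:ℕ) := fun h => hk' (Finset.mem_range.2 h)
          simp [h2])]
    refine Finset.sum_congr rfl fun k hk => ?_
    have h1 : k < (j:ℕ) := Finset.mem_range.1 hk
    have h2 : k < N - 1 := by omega
    simp [h1, h2]
  -- S ∘ Σ = id on vectors
  have hSSig : ∀ (y : Fin (N-1) → ℝ), S.mulVec (Sig.mulVec y) = y := by
    intro y
    funext i
    rw [hSvec, hSigvec, hSigvec]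
    simp only
    rw [Finset.sum_range_succ]
    simp [i.isLt]
  -- Σ ∘ S on vectors: x ↦ x - x 0 • 1
  have hSigS : ∀ (x : Fin N → ℝ),
      Sig.mulVec (S.mulVec x) = x - (x ⟨0, by omega⟩) • ((fun _ => 1) : Fin N → ℝ) := by
    intro x
    funext j
    rw [hSigvec]
    have key : ∀ k ∈ Finset.range (j:ℕ),
        (if h : k < N - 1 then S.mulVec x ⟨k, h⟩ else 0)
          = (fun n : ℕ => x ⟨min n (N-1), by omega⟩) (k+1)
            - (fun n : ℕ => x ⟨min n (N-1), by omega⟩) k := by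
      intro k hk
      have hk1 : k < (j:ℕ) := Finset.mem_range.1 hk
      have hk2 : k < N - 1 := by omega
      simp only [hk2, dif_pos]
      rw [hSvec]
      congr 2 <;> simp [Fin.ext_iff] <;> omega
    rw [Finset.sum_congr rfl key, Finset.sum_range_sub (fun n => x ⟨min n (N-1), by omega⟩)]
    have hj : min (j:ℕ) (N-1) = (j:ℕ) := by omega
    simp only [Pi.sub_apply, Pi.smul_apply, smul_eq_mul, mul_one]
    congr 1
    · congr 1; simp [Fin.ext_iff, hj]
  refine ⟨S * D * Sig, ?_, ?_⟩
  · -- existence: S * D = (S * D * Σ) * S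
    apply Matrix.ext
    intro i k
    have h : ∀ (v : Fin N → ℝ), (S * D).mulVec v = (S * D * Sig * S).mulVec v := by
      intro v
      simp only [← Matrix.mulVec_mulVec]
      rw [hSigS, Matrix.mulVec_sub, Matrix.mulVec_smul, hone, smul_zero, sub_zero]
    have := congrFun (h (Pi.single k 1)) i
    simpa [Matrix.mulVec_single] using this
  · -- uniqueness
    intro A hA
    apply Matrix.ext
    intro i k
    have h : ∀ (y : Fin (N-1) → ℝ), A.mulVec y = (S * D * Sig).mulVec y := by
      intro y
      have h1 : A.mulVec (S.mulVec (Sig.mulVec y)) = (S*D).mulVec (Sig.mulVec y) := by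
        rw [Matrix.mulVec_mulVec, ← hA, Matrix.mulVec_mulVec]
      rw [hSSig] at h1
      rw [h1]
      simp only [← Matrix.mulVec_mulVec]
    have := congrFun (h (Pi.single k 1)) i
    simpa [Matrix.mulVec_single] using this
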